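/- (Lemma: detection of CFG rules.) Let I be a CFG with categories produced by Instructions 1–4 and G the minimalist grammar constructed from I by Instructions 5–6. Let φ and χ be right-hand-side words of rules of I with categories 𝒞_φ and 𝒞_χ, and let F = ⟨f :: A₁,…,Aₙ, 𝒞_φ, …⟩ (n ≤ 2) and X = ⟨x :: …, 𝒞_χ, −t₁,…,−t_m⟩ be their word items created by Instruction 5 (with exponents f and x equal to φ and χ with nonterminals omitted). If some selector-licensor block Aᵢ of F equals either =𝒞_χ or =𝒞_χ, +tⱼ for some j ≤ m, then there exists a nonterminal N contained in the word φ such that N generates χ, i.e. I has the rule N → χ # 𝒞_χ and N occurs in φ. -/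

import Mathlib

/-! ### Context-free grammars -/

/-- One-step rewriting for a set of context-free rules: replace one occurrence of a
nonterminal `A` by the right-hand side of one of its rules. -/
def CFGProduces {N T : Type} (rules : Set (N × List (N ⊕ T)))
    (u v : List (N ⊕ T)) : Prop :=
  ∃ (A : N) (α p s : List (N ⊕ T)),
    (A, α) ∈ rules ∧ u = p ++ Sum.inl A :: s ∧ v = p ++ α ++ s

/-- The derivation relation `⇒*`: reflexive-transitive closure of one-step rewriting. -/
def CFGDerives {N T : Type} (rules : Set (N × List (N ⊕ T))) :
    List (N ⊕ T) → List (N ⊕ T) → Prop :=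
  Relation.ReflTransGen (CFGProduces rules)

/-! ### Minimalist grammars (Stabler 1997) -/

/-- Syntactic features of a minimalist grammar over categories `C` and
licensee/licensor names `L`: selectors `=c`, categories `c`, licensors `+x`,
licensees `−x`. -/
inductive Feature (C L : Type) : Type where
  | sel : C → Feature C L
  | cat : C → Feature C L
  | pos : L → Feature C L
  | neg : L → Feature C L

/-- An MG item `⟨exp :: feats⟩` (lexical, `isLex = true`) or `⟨exp : feats⟩`
(derived, `isLex = false`). -/
structure MGItem (T C L : Type) : Type where
  exp : List T
  isLex : Bool
  feats : List (Feature C L)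

/-- An MG expression: a chain consisting of a head item and a list of
non-finally merged items. -/
abbrev MGExpr (T C L : Type) : Type := MGItem T C L × List (MGItem T C L)

/-- The merge operations: `MergeStep merger mergee output`. -/
inductive MergeStep {T C L : Type} :
    MGExpr T C L → MGExpr T C L → MGExpr T C L → Prop where
  | merge1 (e₁ e₂ : List T) (f : C) (t : List (Feature C L)) (b : Bool)
      (q : List (MGItem T C L)) :
      MergeStep (⟨e₁, true, Feature.sel f :: t⟩, [])
        (⟨e₂, b, [Feature.cat f]⟩, q)
        (⟨e₁ ++ e₂, false, t⟩, q)
  | merge2 (e₁ e₂ : List T) (f : C) (t : List (Feature C L)) (b : Bool)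
      (q₁ q₂ : List (MGItem T C L)) :
      MergeStep (⟨e₁, false, Feature.sel f :: t⟩, q₁)
        (⟨e₂, b, [Feature.cat f]⟩, q₂)
        (⟨e₂ ++ e₁, false, t⟩, q₁ ++ q₂)
  | merge3 (e₁ e₂ : List T) (f : C) (t₁ t₂ : List (Feature C L)) (b₁ b₂ : Bool)
      (q₁ q₂ : List (MGItem T C L)) (ht₂ : t₂ ≠ []) :
      MergeStep (⟨e₁, b₁, Feature.sel f :: t₁⟩, q₁)
        (⟨e₂, b₂, Feature.cat f :: t₂⟩, q₂)
        (⟨e₁, false, t₁⟩, q₁ ++ ⟨e₂, false, t₂⟩ :: q₂)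

/-- The move operations: `MoveStep input output`. -/
inductive MoveStep {T C L : Type} : MGExpr T C L → MGExpr T C L → Prop where
  | move1 (e₁ e₂ : List T) (f : L) (t : List (Feature C L)) (b : Bool)
      (q₁ q₂ : List (MGItem T C L)) :
      MoveStep (⟨e₁, false, Feature.pos f :: t⟩, q₁ ++ ⟨e₂, b, [Feature.neg f]⟩ :: q₂)
        (⟨e₂ ++ e₁, false, t⟩, q₁ ++ q₂)
  | move2 (e₁ e₂ : List T) (f : L) (t t₂ : List (Feature C L)) (b : Bool)
      (q₁ q₂ : List (MGItem T C L)) (ht₂ : t₂ ≠ []) :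
      MoveStep (⟨e₁, false, Feature.pos f :: t⟩, q₁ ++ ⟨e₂, b, Feature.neg f :: t₂⟩ :: q₂)
        (⟨e₁, false, t⟩, q₁ ++ ⟨e₂, false, t₂⟩ :: q₂)

/-- Derivability of an expression from a lexicon `lex` by merge and move. -/
inductive MGDeriv {T C L : Type} (lex : Set (MGItem T C L)) : MGExpr T C L → Prop where
  | ax {i : MGItem T C L} : i ∈ lex → MGDeriv lex (i, [])
  | merge {A B F : MGExpr T C L} :
      MGDeriv lex A → MGDeriv lex B → MergeStep A B F → MGDeriv lex F
  | move {A F : MGExpr T C L} : MGDeriv lex A → MoveStep A F → MGDeriv lex F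

/-- `E` is a premise of one application of a structure-building operation with
output `F` (all other premises being derivable from `lex`). -/
def StepOf {T C L : Type} (lex : Set (MGItem T C L)) (E F : MGExpr T C L) : Prop :=
  (∃ B, MGDeriv lex B ∧ MergeStep E B F) ∨
  (∃ A, MGDeriv lex A ∧ MergeStep A E F) ∨
  MoveStep E F

/-- `F` is derived from `E` (possibly in several steps, `E` an ancestor of `F` in a
derivation tree). -/
def DerivedFrom {T C L : Type} (lex : Set (MGItem T C L)) (E F : MGExpr T C L) : Prop :=
  Relation.ReflTransGen (StepOf lex) E F

/-- `E` is part of (the construction of) a legal derivation tree: `E` is derivable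
and some single item of category `CFin` can be derived from it. -/
def InLegalTree {T C L : Type} (lex : Set (MGItem T C L)) (CFin : C)
    (E : MGExpr T C L) : Prop :=
  MGDeriv lex E ∧
    ∃ (e : List T) (b : Bool), DerivedFrom lex E (⟨e, b, [Feature.cat CFin]⟩, [])

/-- The language of the MG with lexicon `lex` and top category `CFin`:
exponents of legal expressions. -/
def MGLanguage {T C L : Type} (lex : Set (MGItem T C L)) (CFin : C) : Set (List T) :=
  {e : List T | ∃ b : Bool, MGDeriv lex (⟨e, b, [Feature.cat CFin]⟩, [])}

/-- The merge of the item `f` (merger, with chain `qf`) with the item `x` (mergee,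
with chain `qx`) is part of the construction of a legal derivation tree. -/
def MergesInLegal {T C L : Type} (lex : Set (MGItem T C L)) (CFin : C)
    (f x : MGItem T C L) : Prop :=
  ∃ (qf qx : List (MGItem T C L)) (F : MGExpr T C L),
    MGDeriv lex (f, qf) ∧ MGDeriv lex (x, qx) ∧
    MergeStep (f, qf) (x, qx) F ∧ InLegalTree lex CFin F

/-- `SelfTriggered lex E F`: `F` is a self-triggered derivation of `E`, i.e. all
merges involved are triggered by `E`'s own selectors (`E` is the iterated merger). -/
inductive SelfTriggered {T C L : Type} (lex : Set (MGItem T C L)) :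
    MGExpr T C L → MGExpr T C L → Prop where
  | refl (E : MGExpr T C L) : SelfTriggered lex E E
  | merge {E A B F : MGExpr T C L} :
      SelfTriggered lex E A → MGDeriv lex B → MergeStep A B F → SelfTriggered lex E F
  | move {E A F : MGExpr T C L} :
      SelfTriggered lex E A → MoveStep A F → SelfTriggered lex E F

/-- `AdaptedFrom lex adapters E F`: `F` is an adapted derivation of `E`, i.e. a
derivation of `E` in which every externally triggered merge is triggered by an
adapter item. -/
inductive AdaptedFrom {T C L : Type} (lex adapters : Set (MGItem T C L)) :
    MGExpr T C L → MGExpr T C L → Prop where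
  | refl (E : MGExpr T C L) : AdaptedFrom lex adapters E E
  | selfMerge {E A B F : MGExpr T C L} :
      AdaptedFrom lex adapters E A → MGDeriv lex B → MergeStep A B F →
      AdaptedFrom lex adapters E F
  | adapterMerge {E B F : MGExpr T C L} {a : MGItem T C L} :
      a ∈ adapters → AdaptedFrom lex adapters E B → MergeStep (a, []) B F →
      AdaptedFrom lex adapters E F
  | move {E A F : MGExpr T C L} :
      AdaptedFrom lex adapters E A → MoveStep A F → AdaptedFrom lex adapters E F

/-- The features of one selector-licensor block `=𝒞, +a₁, …, +aₖ`. -/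
def blockFeats {C L : Type} (B : C × List L) : List (Feature C L) :=
  Feature.sel B.1 :: B.2.map Feature.pos

/-- The feature list consisting of the selector-licensor blocks `Bs`, the category
`c` and the licensees `ts`: `A₁, …, Aₙ, 𝒞, −t₁, …, −tₘ`. -/
def itemFeats {C L : Type} (Bs : List (C × List L)) (c : C) (ts : List L) :
    List (Feature C L) :=
  (Bs.map blockFeats).flatten ++ Feature.cat c :: ts.map Feature.neg

/-! ### The input CFG (output of Instructions 1–4) and the construction
(Instructions 5–8) -/

/-- A CFG with categories as prepared by Instructions 1–4: rules with categories,
a start symbol whose rules have the top category `CFin`, a unique target category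
for every nonterminal, and a classification of the nonterminals into free and
restricted ones. -/
structure PreppedCFG (N T Cat : Type) : Type where
  rules : Set (N × List (N ⊕ T))
  ruleCat : N × List (N ⊕ T) → Cat
  start : N
  CFin : Cat
  target : N → Cat
  Free : N → Prop

namespace PreppedCFG

variable {N T Cat : Type}

/-- The language of the underlying CFG. -/
def language (P : PreppedCFG N T Cat) : Set (List T) :=
  {w : List T | CFGDerives P.rules [Sum.inl P.start] (w.map Sum.inr)}

/-- Well-formedness of the output of Instructions 1–4: the category of each rule is
the target category of its producer; the start symbol targets `CFin`; every free
nonterminal derives every word of its target category; and every rule is terminal,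
right-free, left-restricted, or two-handed free. -/
def WellShaped (P : PreppedCFG N T Cat) : Prop :=
  (∀ r ∈ P.rules, P.ruleCat r = P.target r.1) ∧
  P.target P.start = P.CFin ∧
  (∀ X : N, P.Free X → ∀ r ∈ P.rules, P.target r.1 = P.target X → (X, r.2) ∈ P.rules) ∧
  (∀ r ∈ P.rules,
    (∃ w : List T, r.2 = w.map Sum.inr) ∨
    (∃ (w : List T) (X : N), P.Free X ∧ r.2 = w.map Sum.inr ++ [Sum.inl X]) ∨
    (∃ (Y : N) (w : List T), ¬ P.Free Y ∧ r.2 = Sum.inl Y :: w.map Sum.inr) ∨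
    (∃ (Y : N) (w : List T) (X : N), P.Free Y ∧ P.Free X ∧
      r.2 = Sum.inl Y :: (w.map Sum.inr ++ [Sum.inl X])))

/-- Specification of the licensee ordering `ord` used in Instruction 6: `ord α c`
lists, without repetition, exactly the restricted nonterminals `R` generating the
CFG word `α` in category `c`. -/
def OrdSpec (P : PreppedCFG N T Cat) (ord : List (N ⊕ T) → Cat → List N) : Prop :=
  ∀ (α : List (N ⊕ T)) (c : Cat),
    (ord α c).Nodup ∧
    ∀ R : N, R ∈ ord α c ↔ (¬ P.Free R ∧ (R, α) ∈ P.rules ∧ P.target R = c)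

/-- `WordItemOf P ord A α it`: `it` is the word item (Instructions 5–6) representing
the CFG word `α` of the rule `A → α`; the licensee name `a_R` of a restricted
nonterminal `R` is modelled as `R` itself. -/
inductive WordItemOf (P : PreppedCFG N T Cat) (ord : List (N ⊕ T) → Cat → List N) :
    N → List (N ⊕ T) → MGItem T Cat N → Prop where
  | terminal (A : N) (w : List T)
      (h : (A, (w.map Sum.inr : List (N ⊕ T))) ∈ P.rules) :
      WordItemOf P ord A (w.map Sum.inr)
        ⟨w, true, Feature.cat (P.target A) ::
          (ord (w.map Sum.inr) (P.target A)).map Feature.neg⟩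
  | rightFree (A : N) (w : List T) (X : N) (hX : P.Free X)
      (h : (A, w.map Sum.inr ++ [Sum.inl X]) ∈ P.rules) :
      WordItemOf P ord A (w.map Sum.inr ++ [Sum.inl X])
        ⟨w, true, Feature.sel (P.target X) :: Feature.cat (P.target A) ::
          (ord (w.map Sum.inr ++ [Sum.inl X]) (P.target A)).map Feature.neg⟩
  | leftRestricted (A Y : N) (w : List T) (hY : ¬ P.Free Y)
      (h : (A, Sum.inl Y :: w.map Sum.inr) ∈ P.rules) :
      WordItemOf P ord A (Sum.inl Y :: w.map Sum.inr)
        ⟨w, true, Feature.sel (P.target Y) :: Feature.pos Y ::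
          Feature.cat (P.target A) ::
          (ord (Sum.inl Y :: w.map Sum.inr) (P.target A)).map Feature.neg⟩
  | twoHanded (A Y X : N) (w : List T) (hY : P.Free Y) (hX : P.Free X)
      (h : (A, Sum.inl Y :: (w.map Sum.inr ++ [Sum.inl X])) ∈ P.rules) :
      WordItemOf P ord A (Sum.inl Y :: (w.map Sum.inr ++ [Sum.inl X]))
        ⟨w, true, Feature.sel (P.target X) :: Feature.sel (P.target Y) ::
          Feature.cat (P.target A) ::
          (ord (Sum.inl Y :: (w.map Sum.inr ++ [Sum.inl X])) (P.target A)).map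
            Feature.neg⟩

/-- `it` is a word item of the constructed lexicon. -/
def IsWordItem (P : PreppedCFG N T Cat) (ord : List (N ⊕ T) → Cat → List N)
    (it : MGItem T Cat N) : Prop :=
  ∃ (A : N) (α : List (N ⊕ T)), WordItemOf P ord A α it

/-- Remove adapters (Instruction 7): `⟨ε :: =𝒞, +a, 𝒞⟩` for each licensee `−a`
appearing in some word item of category `𝒞`. -/
def IsRemoveAdapter (P : PreppedCFG N T Cat) (ord : List (N ⊕ T) → Cat → List N)
    (it : MGItem T Cat N) : Prop :=
  ∃ (c : Cat) (a : N),
    (∃ jt : MGItem T Cat N, P.IsWordItem ord jt ∧ Feature.cat c ∈ jt.feats ∧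
      Feature.neg a ∈ jt.feats) ∧
    it = ⟨[], true, [Feature.sel c, Feature.pos a, Feature.cat c]⟩

/-- Select adapters (Instruction 8): `⟨ε :: =𝒞, +x, +t, 𝒞, −x⟩` for each licensee
`−x` and each nonempty sequence `−t` of licensees appearing behind `−x` in the
feature list of some word item of category `𝒞`. -/
def IsSelectAdapter (P : PreppedCFG N T Cat) (ord : List (N ⊕ T) → Cat → List N)
    (it : MGItem T Cat N) : Prop :=
  ∃ (c : Cat) (x : N) (t : List N), t ≠ [] ∧
    (∃ jt : MGItem T Cat N, P.IsWordItem ord jt ∧ Feature.cat c ∈ jt.feats ∧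
      (Feature.neg x :: t.map Feature.neg) <:+ jt.feats) ∧
    it = ⟨[], true, Feature.sel c :: Feature.pos x :: t.map Feature.pos ++
      [Feature.cat c, Feature.neg x]⟩

/-- `it` is an adapter item. -/
def IsAdapter (P : PreppedCFG N T Cat) (ord : List (N ⊕ T) → Cat → List N)
    (it : MGItem T Cat N) : Prop :=
  P.IsRemoveAdapter ord it ∨ P.IsSelectAdapter ord it

/-- The lexicon of the MG constructed by Instructions 5–8. -/
def MGLex (P : PreppedCFG N T Cat) (ord : List (N ⊕ T) → Cat → List N) :
    Set (MGItem T Cat N) :=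
  {it | P.IsWordItem ord it ∨ P.IsAdapter ord it}

/-- Recursion-free: no nonterminal `A` admits a nonempty derivation `A ⇒⁺ ω`
with `A` occurring in `ω`. -/
def RecFree (P : PreppedCFG N T Cat) : Prop :=
  ∀ (A : N) (ω : List (N ⊕ T)),
    Relation.TransGen (CFGProduces P.rules) [Sum.inl A] ω → Sum.inl A ∉ ω

/-- Category-recursion free: recursion-free and for every rule `A → α # 𝒞` and every
derivation `α ⇒* ω`, the string `ω` contains no nonterminal that is the left-hand
side of a rule of category `𝒞`. -/
def CatRecFree (P : PreppedCFG N T Cat) : Prop :=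
  P.RecFree ∧
  ∀ r ∈ P.rules, ∀ ω : List (N ⊕ T), CFGDerives P.rules r.2 ω →
    ∀ B : N, Sum.inl B ∈ ω → ∀ r' ∈ P.rules, r'.1 = B → P.ruleCat r' ≠ P.ruleCat r

end PreppedCFG


section Aux

variable {C L : Type}

private lemma itemFeats_eq_cat {Bs : List (C × List L)} {c cφ : C}
    {ts : List L} {rest : List (Feature C L)}
    (h : itemFeats Bs cφ ts = Feature.cat c :: rest) : Bs = [] := by
  cases Bs with
  | nil => rfl
  | cons b bs => simp [itemFeats, blockFeats] at h

private lemma itemFeats_eq_sel_cat {Bs : List (C × List L)} {c d cφ : C}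
    {ts us : List L}
    (h : itemFeats Bs cφ ts = Feature.sel c :: Feature.cat d :: us.map Feature.neg) :
    Bs = [(c, [])] := by
  match Bs with
  | [] => simp [itemFeats] at h
  | (c1, l :: ls) :: bs => simp [itemFeats, blockFeats] at h
  | (c1, []) :: (c2, ls2) :: bs => simp [itemFeats, blockFeats] at h
  | [(c1, [])] => simp [itemFeats, blockFeats] at h; simp [h.1]

private lemma itemFeats_eq_sel_pos_cat {Bs : List (C × List L)} {c d cφ : C} {y : L}
    {ts us : List L}
    (h : itemFeats Bs cφ ts =
      Feature.sel c :: Feature.pos y :: Feature.cat d :: us.map Feature.neg) :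
    Bs = [(c, [y])] := by
  match Bs with
  | [] => simp [itemFeats] at h
  | (c1, []) :: [] => simp [itemFeats, blockFeats] at h
  | (c1, []) :: b :: bs => simp [itemFeats, blockFeats] at h
  | (c1, [l]) :: (c2, ls2) :: bs => simp [itemFeats, blockFeats] at h
  | (c1, l :: l' :: ls) :: bs => simp [itemFeats, blockFeats] at h
  | [(c1, [l])] => simp [itemFeats, blockFeats] at h; simp [h.1, h.2.1]

private lemma itemFeats_eq_sel_sel_cat {Bs : List (C × List L)} {c c' d cφ : C}
    {ts us : List L}
    (h : itemFeats Bs cφ ts =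
      Feature.sel c :: Feature.sel c' :: Feature.cat d :: us.map Feature.neg) :
    Bs = [(c, []), (c', [])] := by
  match Bs with
  | [] => simp [itemFeats] at h
  | (c1, l :: ls) :: bs => simp [itemFeats, blockFeats] at h
  | [(c1, [])] => simp [itemFeats, blockFeats] at h
  | (c1, []) :: (c2, l :: ls2) :: bs => simp [itemFeats, blockFeats] at h
  | (c1, []) :: (c2, []) :: b :: bs => simp [itemFeats, blockFeats] at h
  | [(c1, []), (c2, [])] => simp [itemFeats, blockFeats] at h; simp [h.1, h.2.1]

end Aux

section Aux2

variable {N T Cat : Type} {P : PreppedCFG N T Cat} {ord : List (N ⊕ T) → Cat → List N}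

private lemma wordItem_rule {A : N} {α : List (N ⊕ T)} {it : MGItem T Cat N}
    (h : PreppedCFG.WordItemOf P ord A α it) : (A, α) ∈ P.rules := by
  cases h <;> assumption

private lemma wordItem_neg {A : N} {α : List (N ⊕ T)} {it : MGItem T Cat N} {t : N}
    (h : PreppedCFG.WordItemOf P ord A α it) (hn : Feature.neg t ∈ it.feats) :
    t ∈ ord α (P.target A) := by
  cases h <;> simpa using hn

end Aux2

/-- detection of CFG rules: let `itF` and `itX` be the word items of
the rules `A → φ` and `A' → χ` (with `𝒞_χ = target A'`). If one of the
selector-licensor blocks of `itF` equals `=𝒞_χ`, or equals `=𝒞_χ, +t` for a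
licensee `−t` of `itX`, then some nonterminal `N` occurring in the word `φ`
generates `χ`, i.e. `I` has the rule `N → χ # 𝒞_χ`. -/
theorem stmt12 {N T Cat : Type} (P : PreppedCFG N T Cat)
    (ord : List (N ⊕ T) → Cat → List N)
    (hWS : P.WellShaped) (hOrd : P.OrdSpec ord)
    (A A' : N) (φ χ : List (N ⊕ T)) (itF itX : MGItem T Cat N)
    (hF : PreppedCFG.WordItemOf P ord A φ itF)
    (hX : PreppedCFG.WordItemOf P ord A' χ itX)
    (Bs : List (Cat × List N)) (cφ : Cat) (ts : List N)
    (hfeats : itF.feats = itemFeats Bs cφ ts)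
    (hblock : (P.target A', ([] : List N)) ∈ Bs ∨
      ∃ t : N, (P.target A', [t]) ∈ Bs ∧ Feature.neg t ∈ itX.feats) :
    ∃ Nn : N, Sum.inl Nn ∈ φ ∧ (Nn, χ) ∈ P.rules ∧
      P.ruleCat (Nn, χ) = P.target A' := by
  have hXrule : (A', χ) ∈ P.rules := wordItem_rule hX
  cases hF with
  | terminal w h =>
      have hBs : Bs = [] := itemFeats_eq_cat hfeats.symm
      simp [hBs] at hblock
  | rightFree w X hXf h =>
      have hBs : Bs = [(P.target X, [])] := itemFeats_eq_sel_cat hfeats.symm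
      simp [hBs] at hblock
      have hmem : (X, χ) ∈ P.rules :=
        hWS.2.2.1 X hXf (A', χ) hXrule (by simpa using hblock)
      refine ⟨X, by simp, hmem, ?_⟩
      rw [hWS.1 (X, χ) hmem, hblock]
  | leftRestricted Y w hYr h =>
      have hBs : Bs = [(P.target Y, [Y])] := itemFeats_eq_sel_pos_cat hfeats.symm
      simp [hBs] at hblock
      obtain ⟨heq, hneg⟩ := hblock
      set t := Y with ht
      have hYo : t ∈ ord χ (P.target A') := wordItem_neg hX hneg
      obtain ⟨-, hrule, htg⟩ := ((hOrd χ (P.target A')).2 t).mp hYo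
      refine ⟨t, by simp, hrule, ?_⟩
      rw [hWS.1 (t, χ) hrule]; exact htg
  | twoHanded Y X w hYf hXf h =>
      have hBs : Bs = [(P.target X, []), (P.target Y, [])] :=
        itemFeats_eq_sel_sel_cat hfeats.symm
      simp [hBs] at hblock
      rcases hblock with hb | hb
      · have hmem : (X, χ) ∈ P.rules :=
          hWS.2.2.1 X hXf (A', χ) hXrule (by simpa using hb)
        refine ⟨X, by simp, hmem, ?_⟩
        rw [hWS.1 (X, χ) hmem, hb]
      · have hmem : (Y, χ) ∈ P.rules :=
          hWS.2.2.1 Y hYf (A', χ) hXrule (by simpa using hb)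
        refine ⟨Y, by simp, hmem, ?_⟩
        rw [hWS.1 (Y, χ) hmem, hb]
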